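/- Let X be a complete separable metric space (a metric space that is a complete uniform space and has a countable dense subset), equipped with its metric topology. Let p : Set X → Prop satisfy: p ∅ is false; p X is true; for all open sets U, V ⊆ X, p (U ∩ V) ↔ (p U ∧ p V); and for every sequence (U_n)_{n∈ℕ} of open subsets of X, p (⋃_n U_n) ↔ ∃ n, p (U_n). Then there exists a unique point x ∈ X such that for every open set U ⊆ X, p U ↔ x ∈ U. -/

import Mathlib

open Metric in

/-- A complete separable metric space is sober in the σ-frame sense: every
σ-frame homomorphism from the metric topology to truth values is the
neighborhood filter of a unique point. -/
theorem complete_separable_metric_sober {X : Type*} [MetricSpace X] [CompleteSpace X]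
    [TopologicalSpace.SeparableSpace X]
    (p : Set X → Prop)
    (hbot : ¬ p ∅)
    (htop : p Set.univ)
    (hmeet : ∀ U V : Set X, IsOpen U → IsOpen V → (p (U ∩ V) ↔ (p U ∧ p V)))
    (hjoin : ∀ U : ℕ → Set X, (∀ n, IsOpen (U n)) → (p (⋃ n, U n) ↔ ∃ n, p (U n))) :
    ∃! x : X, ∀ U : Set X, IsOpen U → (p U ↔ x ∈ U) := by
  classical
  -- X is nonempty
  have hX : Nonempty X := by
    by_contra h
    rw [not_nonempty_iff] at h
    rw [Set.univ_eq_empty_iff.mpr h] at htop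
    exact hbot htop
  -- monotonicity of p on open sets
  have mono : ∀ U V : Set X, IsOpen U → IsOpen V → U ⊆ V → p U → p V := by
    intro U V hU hV hUV hpU
    have h := (hmeet U V hU hV).mp (by rwa [Set.inter_eq_left.mpr hUV])
    exact h.2
  -- dense sequence
  obtain ⟨d, hd⟩ := TopologicalSpace.exists_dense_seq X
  -- covering lemma: inside any open U with p U, find a small ball with p and closure in U
  have cover : ∀ U : Set X, IsOpen U → p U → ∀ ε : ℝ, 0 < ε →
      ∃ c : X, ∃ r : ℝ, 0 < r ∧ r ≤ ε ∧ p (ball c r) ∧ closedBall c r ⊆ U := by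
    intro U hU hpU ε hε
    set ρ : ℕ → ℝ := fun k => ε * (1/2) ^ (k+1) with hρdef
    have hρpos : ∀ k, 0 < ρ k := fun k => by positivity
    have hρle : ∀ k, ρ k ≤ ε := by
      intro k
      have : (1/2:ℝ) ^ (k+1) ≤ 1 := pow_le_one₀ (by norm_num) (by norm_num)
      calc ε * (1/2)^(k+1) ≤ ε * 1 := by
            exact mul_le_mul_of_nonneg_left this hε.le
        _ = ε := mul_one ε
    set F : ℕ → Set X := fun m =>
      if closedBall (d m.unpair.1) (ρ m.unpair.2) ⊆ U
      then ball (d m.unpair.1) (ρ m.unpair.2) else ∅ with hF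
    have hFopen : ∀ m, IsOpen (F m) := by
      intro m; simp only [hF]; split
      · exact isOpen_ball
      · exact isOpen_empty
    have hFU : (⋃ m, F m) = U := by
      apply Set.Subset.antisymm
      · intro x hx
        simp only [Set.mem_iUnion] at hx
        obtain ⟨m, hm⟩ := hx
        simp only [hF] at hm
        by_cases hc : closedBall (d m.unpair.1) (ρ m.unpair.2) ⊆ U
        · rw [if_pos hc] at hm
          exact hc (ball_subset_closedBall hm)
        · rw [if_neg hc] at hm
          exact absurd hm (Set.notMem_empty x)
      · intro x hx
        obtain ⟨δ, hδ, hδU⟩ := Metric.isOpen_iff.mp hU x hx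
        obtain ⟨k, hk⟩ := exists_pow_lt_of_lt_one (x := δ/(3*ε)) (y := (1/2:ℝ))
          (by positivity) (by norm_num)
        have hρk : 3 * ρ k ≤ δ := by
          have h1 : (1/2:ℝ)^(k+1) ≤ (1/2:ℝ)^k := by
            rw [pow_succ]
            nlinarith [pow_pos (by norm_num : (0:ℝ) < 1/2) k]
          have h2 : ε * (1/2:ℝ)^k ≤ δ/3 := by
            have h3 : ε * (1/2:ℝ)^k ≤ ε * (δ/(3*ε)) :=
              mul_le_mul_of_nonneg_left hk.le hε.le
            have heq : ε * (δ/(3*ε)) = δ/3 := by field_simp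
            rw [heq] at h3; exact h3
          calc 3 * ρ k = 3 * (ε * (1/2)^(k+1)) := rfl
            _ ≤ 3 * (ε * (1/2)^k) := by nlinarith [mul_le_mul_of_nonneg_left h1 hε.le]
            _ ≤ 3 * (δ/3) := by linarith
            _ = δ := by ring
        obtain ⟨n, hn⟩ := hd.exists_dist_lt x (hρpos k)
        refine Set.mem_iUnion.mpr ⟨Nat.pair n k, ?_⟩
        have hsub : closedBall (d n) (ρ k) ⊆ U := by
          intro y hy
          apply hδU
          have ht : dist y x ≤ dist y (d n) + dist (d n) x :=
            dist_triangle y (d n) x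
          have h3 : dist y x < δ := by
            rw [Metric.mem_closedBall] at hy
            have hn2 : dist (d n) x < ρ k := by rw [dist_comm]; exact hn
            linarith [hρpos k]
          exact Metric.mem_ball.mpr h3
        simp only [hF, Nat.unpair_pair]
        rw [if_pos hsub]
        exact Metric.mem_ball.mpr hn
    have := (hjoin F hFopen).mp (by rwa [hFU])
    obtain ⟨m, hm⟩ := this
    simp only [hF] at hm
    by_cases hc : closedBall (d m.unpair.1) (ρ m.unpair.2) ⊆ U
    · rw [if_pos hc] at hm
      exact ⟨d m.unpair.1, ρ m.unpair.2, hρpos _, hρle _, hm, hc⟩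
    · rw [if_neg hc] at hm
      exact absurd hm hbot
  -- countable base of balls centered at dense points
  set B : ℕ → Set X := fun m => ball (d m.unpair.1) (1/(m.unpair.2+1) : ℝ) with hBdef
  have hBopen : ∀ m, IsOpen (B m) := fun m => isOpen_ball
  -- base lemma
  have base : ∀ U : Set X, IsOpen U → p U → ∃ m, B m ⊆ U ∧ p (B m) := by
    intro U hU hpU
    set F : ℕ → Set X := fun m => if B m ⊆ U then B m else ∅ with hF
    have hFopen : ∀ m, IsOpen (F m) := by
      intro m; simp only [hF]; split
      · exact hBopen m
      · exact isOpen_empty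
    have hFU : (⋃ m, F m) = U := by
      apply Set.Subset.antisymm
      · intro x hx
        simp only [Set.mem_iUnion] at hx
        obtain ⟨m, hm⟩ := hx
        simp only [hF] at hm
        by_cases hc : B m ⊆ U
        · rw [if_pos hc] at hm
          exact hc hm
        · rw [if_neg hc] at hm
          exact absurd hm (Set.notMem_empty x)
      · intro x hx
        obtain ⟨δ, hδ, hδU⟩ := Metric.isOpen_iff.mp hU x hx
        obtain ⟨k, hk⟩ := exists_nat_gt (2/δ)
        have hkpos : (0:ℝ) < 1/(k+1) := by positivity
        have hkδ : 2 * (1/(k+1):ℝ) < δ := by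
          have hk1 : 2/δ < (k:ℝ)+1 := by
            have : (0:ℝ) ≤ (k:ℝ) := Nat.cast_nonneg k
            linarith
          have h2 : 2 < ((k:ℝ)+1) * δ := (div_lt_iff₀ hδ).mp hk1
          rw [mul_one_div, div_lt_iff₀ (by positivity : (0:ℝ) < (k:ℝ)+1)]
          linarith
        obtain ⟨n, hn⟩ := hd.exists_dist_lt x hkpos
        refine Set.mem_iUnion.mpr ⟨Nat.pair n k, ?_⟩
        have hsub : B (Nat.pair n k) ⊆ U := by
          intro y hy
          apply hδU
          simp only [hBdef, Nat.unpair_pair] at hy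
          rw [Metric.mem_ball] at hy ⊢
          calc dist y x ≤ dist y (d n) + dist x (d n) := by
                rw [dist_comm x (d n)]; exact dist_triangle y (d n) x
            _ < 1/(k+1) + 1/(k+1) := by push_cast at hy ⊢; linarith
            _ < δ := by linarith
        simp only [hF]
        rw [if_pos hsub]
        simp only [hBdef, Nat.unpair_pair]
        exact Metric.mem_ball.mpr (by push_cast at hn ⊢; exact hn)
    obtain ⟨m, hm⟩ := (hjoin F hFopen).mp (by rwa [hFU])
    simp only [hF] at hm
    by_cases hc : B m ⊆ U
    · rw [if_pos hc] at hm; exact ⟨m, hc, hm⟩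
    · rw [if_neg hc] at hm; exact absurd hm hbot
  -- refinement step
  have step : ∀ (k : ℕ) (c : X) (r : ℝ), 0 < r → p (Metric.ball c r) →
      ∃ c' : X, ∃ r' : ℝ, 0 < r' ∧ r' ≤ (1/2)^(k+1) ∧ p (ball c' r') ∧
        closedBall c' r' ⊆ ball c r ∧
        (p (ball c r ∩ B k) → closedBall c' r' ⊆ B k) := by
    intro k c r hr hp
    by_cases h : p (ball c r ∩ B k)
    · obtain ⟨c', r', h1, h2, h3, h4⟩ := cover (ball c r ∩ B k)
        (isOpen_ball.inter (hBopen k)) h ((1/2)^(k+1)) (by positivity)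
      exact ⟨c', r', h1, h2, h3, h4.trans Set.inter_subset_left,
        fun _ => h4.trans Set.inter_subset_right⟩
    · obtain ⟨c', r', h1, h2, h3, h4⟩ := cover (ball c r) isOpen_ball hp
        ((1/2)^(k+1)) (by positivity)
      exact ⟨c', r', h1, h2, h3, h4, fun hh => absurd hh h⟩
  choose! sc sr hs1 hs2 hs3 hs4 hs5 using step
  -- initial ball
  obtain ⟨c0, r0, hc01, hc02, hc03, _⟩ := cover Set.univ isOpen_univ htop 1 one_pos
  -- the recursive sequence
  set f : ℕ → X × ℝ := fun k =>
    Nat.rec (c0, r0) (fun k cr => (sc k cr.1 cr.2, sr k cr.1 cr.2)) k with hfdef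
  have hfsucc : ∀ k, f (k+1) = (sc k (f k).1 (f k).2, sr k (f k).1 (f k).2) := fun k => rfl
  have inv : ∀ k, 0 < (f k).2 ∧ (f k).2 ≤ (1/2)^k ∧ p (ball (f k).1 (f k).2) := by
    intro k
    induction k with
    | zero => exact ⟨hc01, by simp only [pow_zero]; exact hc02, hc03⟩
    | succ k ih =>
      rw [hfsucc k]
      exact ⟨hs1 k _ _ ih.1 ih.2.2, hs2 k _ _ ih.1 ih.2.2, hs3 k _ _ ih.1 ih.2.2⟩
  have link1 : ∀ k, closedBall (f (k+1)).1 (f (k+1)).2 ⊆ ball (f k).1 (f k).2 := by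
    intro k
    rw [hfsucc k]
    exact hs4 k _ _ (inv k).1 (inv k).2.2
  have link2 : ∀ k, p (ball (f k).1 (f k).2 ∩ B k) →
      closedBall (f (k+1)).1 (f (k+1)).2 ⊆ B k := by
    intro k hk
    rw [hfsucc k]
    exact hs5 k _ _ (inv k).1 (inv k).2.2 hk
  -- nesting
  have nested : ∀ k j, k ≤ j → ball (f j).1 (f j).2 ⊆ ball (f k).1 (f k).2 := by
    intro k j hkj
    induction j with
    | zero => simp_all
    | succ j ih =>
      rcases Nat.lt_or_ge k (j+1) with h | h
      · have hkj' : k ≤ j := Nat.lt_succ_iff.mp h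
        exact (ball_subset_closedBall.trans (link1 j)).trans (ih hkj')
      · have : k = j + 1 := le_antisymm hkj h
        subst this; exact Set.Subset.rfl
  have cmem : ∀ k j, k ≤ j → (f j).1 ∈ ball (f k).1 (f k).2 := by
    intro k j hkj
    exact nested k j hkj (Metric.mem_ball_self (inv j).1)
  -- Cauchy
  have hC : CauchySeq (fun k => (f k).1) := by
    rw [Metric.cauchySeq_iff']
    intro ε hε
    obtain ⟨N, hN⟩ := exists_pow_lt_of_lt_one hε (by norm_num : (1/2:ℝ) < 1)
    refine ⟨N, fun n hn => ?_⟩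
    have := cmem N n hn
    rw [Metric.mem_ball] at this
    calc dist (f n).1 (f N).1 < (f N).2 := this
      _ ≤ (1/2)^N := (inv N).2.1
      _ < ε := hN
  obtain ⟨x, hx⟩ := cauchySeq_tendsto_of_complete hC
  -- x in all closed balls
  have xclosed : ∀ k, x ∈ closedBall (f k).1 (f k).2 := by
    intro k
    apply isClosed_closedBall.mem_of_tendsto hx
    filter_upwards [Filter.eventually_ge_atTop k] with j hj
    exact ball_subset_closedBall (cmem k j hj)
  have xball : ∀ k, x ∈ ball (f k).1 (f k).2 := fun k => link1 k (xclosed (k+1))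
  -- the specification
  have spec : ∀ U : Set X, IsOpen U → (p U ↔ x ∈ U) := by
    intro U hU
    constructor
    · intro hpU
      obtain ⟨m, hBU, hpB⟩ := base U hU hpU
      have hmeet' : p (ball (f m).1 (f m).2 ∩ B m) :=
        (hmeet _ _ isOpen_ball (hBopen m)).mpr ⟨(inv m).2.2, hpB⟩
      exact hBU (link2 m hmeet' (xclosed (m+1)))
    · intro hxU
      obtain ⟨ε, hε, hballU⟩ := Metric.isOpen_iff.mp hU x hxU
      obtain ⟨k, hk⟩ := exists_pow_lt_of_lt_one (x := ε/2) (y := (1/2:ℝ))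
        (by positivity) (by norm_num)
      apply mono (ball (f k).1 (f k).2) U isOpen_ball hU _ (inv k).2.2
      intro y hy
      apply hballU
      rw [Metric.mem_ball] at hy ⊢
      have hxk : dist x (f k).1 ≤ (f k).2 := Metric.mem_closedBall.mp (xclosed k)
      calc dist y x ≤ dist y (f k).1 + dist x (f k).1 := by
            rw [dist_comm x (f k).1]; exact dist_triangle y (f k).1 x
        _ < (f k).2 + (f k).2 := by linarith
        _ ≤ (1/2)^k + (1/2)^k := by linarith [(inv k).2.1]
        _ < ε := by linarith
  -- conclusion
  refine ⟨x, spec, ?_⟩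
  intro y hy
  by_contra hne
  have hdist : 0 < dist y x := dist_pos.mpr hne
  set ε := dist y x / 2 with hε
  have hεpos : 0 < ε := by positivity
  have hpy : p (ball y ε) := (hy _ isOpen_ball).mpr (Metric.mem_ball_self hεpos)
  have hpx : p (ball x ε) := (spec _ isOpen_ball).mpr (Metric.mem_ball_self hεpos)
  have hdisj : Disjoint (ball y ε) (ball x ε) :=
    ball_disjoint_ball (by rw [hε]; linarith)
  have : p (ball y ε ∩ ball x ε) :=
    (hmeet _ _ isOpen_ball isOpen_ball).mpr ⟨hpy, hpx⟩
  rw [Set.disjoint_iff_inter_eq_empty.mp hdisj] at this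
  exact hbot this
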